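/- For integers a ≥ 1 and n ≥ 1, there exists a graph G of order n with χ_gp(G) = a if and only if n ≥ 2a − 1. -/

import Mathlib

open SimpleGraph

/-- A set `S` is in general position: no shortest path contains more than two vertices of `S`. -/
def IsGenPosSet {V : Type*} (G : SimpleGraph V) (S : Set V) : Prop :=
  ∀ ⦃u v : V⦄ (p : G.Walk u v), p.IsPath → p.length = G.dist u v →
    ∀ x y z, x ∈ S → y ∈ S → z ∈ S →
      x ∈ p.support → y ∈ p.support → z ∈ p.support →
      x = y ∨ y = z ∨ x = z

/-- `G` can be coloured with `k` colours so that every colour class is in general position. -/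
def GpColorable {V : Type*} (G : SimpleGraph V) (k : ℕ) : Prop :=
  ∃ c : V → Fin k, ∀ i, IsGenPosSet G {v | c v = i}

/-- The gp-chromatic number: least number of colours in a colouring whose classes are
general position sets. -/
noncomputable def gpChromatic {V : Type*} (G : SimpleGraph V) : ℕ :=
  sInf {k | GpColorable G k}

/-! ### Auxiliary construction: a path on vertices `0,…,2a-2` plus isolated vertices. -/

/-- The graph on `Fin n` consisting of a path on vertices `0,…,2a-2` together with
`n - (2a-1)` isolated vertices. -/
def brG (n a : ℕ) : SimpleGraph (Fin n) :=
  SimpleGraph.fromRel (fun u v => (u : ℕ) + 1 = v ∧ (v : ℕ) < 2 * a - 1)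

lemma brG_adj_elim {n a : ℕ} {u v : Fin n} (h : (brG n a).Adj u v) :
    (u : ℕ) < 2 * a - 1 ∧ (v : ℕ) < 2 * a - 1 ∧
      ((u : ℕ) + 1 = v ∨ (v : ℕ) + 1 = u) := by
  obtain ⟨hne, h | h⟩ := h <;> omega

lemma brG_adj_intro {n a : ℕ} {i : ℕ} (h1 : i + 1 < 2 * a - 1) (h2 : i + 1 < n) :
    (brG n a).Adj ⟨i, by omega⟩ ⟨i + 1, h2⟩ :=
  ⟨Fin.ne_of_val_ne (show i ≠ i + 1 by omega), Or.inl ⟨rfl, h1⟩⟩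

lemma brG_walk_bound {n a : ℕ} {u v : Fin n} (p : (brG n a).Walk u v) :
    (u : ℕ) ≤ v + p.length ∧ (v : ℕ) ≤ u + p.length := by
  induction p with
  | nil => omega
  | @cons u w v h q ih =>
    have h' := brG_adj_elim h
    simp only [Walk.length_cons]
    omega

lemma brG_support_lt {n a : ℕ} : ∀ {u v : Fin n} (p : (brG n a).Walk u v),
    1 ≤ p.length → ∀ x ∈ p.support, (x : ℕ) < 2 * a - 1 := by
  intro u v p
  induction p with
  | nil => intro h; simp at h
  | @cons u w v h q ih =>
    intro _ x hx
    have hadj := brG_adj_elim h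
    rw [Walk.support_cons, List.mem_cons] at hx
    rcases hx with rfl | hx
    · omega
    · cases q with
      | nil =>
        simp only [Walk.support_nil, List.mem_singleton] at hx
        subst hx; omega
      | cons h' q' =>
        exact ih (by simp [Walk.length_cons]) x hx

/-- The straight walk from vertex `0` to vertex `m` in `brG n a`. -/
def sw (n a : ℕ) (ha : 1 ≤ a) (hn : 2 * a - 1 ≤ n) :
    (m : ℕ) → (hm : m ≤ 2 * a - 2) → (brG n a).Walk ⟨0, by omega⟩ ⟨m, by omega⟩
  | 0, _ => Walk.nil
  | m + 1, hm =>
      (sw n a ha hn m (by omega)).concat (brG_adj_intro (by omega) (by omega))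

lemma sw_length (n a : ℕ) (ha : 1 ≤ a) (hn : 2 * a - 1 ≤ n) :
    ∀ (m : ℕ) (hm : m ≤ 2 * a - 2), (sw n a ha hn m hm).length = m := by
  intro m
  induction m with
  | zero => intro hm; rfl
  | succ m ih =>
    intro hm
    rw [sw, Walk.length_concat, ih]

lemma sw_support (n a : ℕ) (ha : 1 ≤ a) (hn : 2 * a - 1 ≤ n) :
    ∀ (m : ℕ) (hm : m ≤ 2 * a - 2) (x : Fin n),
      x ∈ (sw n a ha hn m hm).support ↔ (x : ℕ) ≤ m := by
  intro m
  induction m with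
  | zero =>
    intro hm x
    simp only [sw, Walk.support_nil, List.mem_singleton, Fin.ext_iff]
    omega
  | succ m ih =>
    intro hm x
    rw [sw, Walk.support_concat, List.mem_append,
      List.mem_singleton, ih, Fin.ext_iff]
    simp only [Fin.val_mk]
    omega

lemma sw_isPath (n a : ℕ) (ha : 1 ≤ a) (hn : 2 * a - 1 ≤ n) :
    ∀ (m : ℕ) (hm : m ≤ 2 * a - 2), (sw n a ha hn m hm).IsPath := by
  intro m
  induction m with
  | zero => intro hm; exact Walk.IsPath.nil
  | succ m ih =>
    intro hm
    rw [Walk.isPath_def, sw, Walk.support_concat,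
      List.nodup_append']
    refine ⟨(ih (by omega)).support_nodup, List.nodup_singleton _, ?_⟩
    intro x hx hx'
    rw [sw_support] at hx
    rw [List.mem_singleton] at hx'
    subst hx'
    simp at hx

lemma sw_dist (n a : ℕ) (ha : 1 ≤ a) (hn : 2 * a - 1 ≤ n) :
    (brG n a).dist ⟨0, by omega⟩ ⟨2 * a - 2, by omega⟩ = 2 * a - 2 := by
  have hle : (brG n a).dist ⟨0, by omega⟩ ⟨2 * a - 2, by omega⟩ ≤ 2 * a - 2 := by
    have := SimpleGraph.dist_le (sw n a ha hn (2 * a - 2) le_rfl)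
    rwa [sw_length] at this
  have hreach : (brG n a).Reachable ⟨0, by omega⟩ ⟨2 * a - 2, by omega⟩ :=
    (sw n a ha hn (2 * a - 2) le_rfl).reachable
  obtain ⟨q, hq⟩ := hreach.exists_walk_length_eq_dist
  have h2 : 2 * a - 2 ≤ 0 + q.length := (brG_walk_bound q).2
  omega

lemma brG_gpColorable (n a : ℕ) (ha : 1 ≤ a) (hn : 2 * a - 1 ≤ n) :
    GpColorable (brG n a) a := by
  refine ⟨fun v => if h : (v : ℕ) < 2 * a - 1 then ⟨(v : ℕ) / 2, by omega⟩
    else ⟨0, ha⟩, ?_⟩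
  intro i u v p hp hlen x y z hx hy hz hxs hys hzs
  by_cases h1 : p.length = 0
  · have hsup : p.support.length = 1 := by rw [Walk.length_support]; omega
    obtain ⟨w, hw⟩ := List.length_eq_one_iff.mp hsup
    rw [hw, List.mem_singleton] at hxs hys
    left; rw [hxs, hys]
  · have hlt := brG_support_lt p (by omega)
    have hx2 := hlt x hxs
    have hy2 := hlt y hys
    have hz2 := hlt z hzs
    simp only [Set.mem_setOf_eq] at hx hy hz
    rw [dif_pos hx2] at hx
    rw [dif_pos hy2] at hy
    rw [dif_pos hz2] at hz
    have ex : (x : ℕ) / 2 = (i : ℕ) := congrArg Fin.val hx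
    have ey : (y : ℕ) / 2 = (i : ℕ) := congrArg Fin.val hy
    have ez : (z : ℕ) / 2 = (i : ℕ) := congrArg Fin.val hz
    have : (x : ℕ) = y ∨ (y : ℕ) = z ∨ (x : ℕ) = z := by omega
    rcases this with h | h | h
    · exact Or.inl (Fin.ext h)
    · exact Or.inr (Or.inl (Fin.ext h))
    · exact Or.inr (Or.inr (Fin.ext h))

lemma brG_ge (n a : ℕ) (ha : 1 ≤ a) (hn : 2 * a - 1 ≤ n) :
    ∀ k, GpColorable (brG n a) k → a ≤ k := by
  rintro k ⟨c, hc⟩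
  by_contra hlt
  push_neg at hlt
  have hk : k ≠ 0 := by
    rintro rfl
    exact (c ⟨0, by omega⟩).elim0
  -- pigeonhole on the 2a-1 path vertices
  have hinj : Function.Injective (fun j : Fin (2 * a - 1) => (⟨j, by omega⟩ : Fin n)) := by
    intro j1 j2 h
    simpa [Fin.ext_iff] using h
  set S : Finset (Fin n) :=
    Finset.univ.image (fun j : Fin (2 * a - 1) => (⟨j, by omega⟩ : Fin n)) with hS
  have hcard : S.card = 2 * a - 1 := by
    rw [hS, Finset.card_image_of_injective _ hinj, Finset.card_univ, Fintype.card_fin]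
  have hmaps : ∀ v ∈ S, c v ∈ (Finset.univ : Finset (Fin k)) := fun _ _ => Finset.mem_univ _
  obtain ⟨i, -, hi⟩ :=
    Finset.exists_lt_card_fiber_of_mul_lt_card_of_maps_to (n := 2) hmaps
      (by rw [hcard, Finset.card_univ, Fintype.card_fin]; omega)
  rw [Finset.two_lt_card_iff] at hi
  obtain ⟨x, y, z, hx, hy, hz, hxy, hxz, hyz⟩ := hi
  rw [Finset.mem_filter] at hx hy hz
  have hmem : ∀ w : Fin n, w ∈ S → (w : ℕ) < 2 * a - 1 := by
    intro w hw
    rw [hS, Finset.mem_image] at hw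
    obtain ⟨j, -, rfl⟩ := hw
    exact j.isLt
  have hx1 := hmem x hx.1
  have hy1 := hmem y hy.1
  have hz1 := hmem z hz.1
  have hdist := sw_dist n a ha hn
  have := hc i (sw n a ha hn (2 * a - 2) le_rfl)
    (sw_isPath n a ha hn (2 * a - 2) le_rfl)
    (by rw [sw_length, hdist]) x y z hx.2 hy.2 hz.2
    ((sw_support n a ha hn _ _ x).mpr (by omega))
    ((sw_support n a ha hn _ _ y).mpr (by omega))
    ((sw_support n a ha hn _ _ z).mpr (by omega))
  tauto

lemma brG_gpChromatic (n a : ℕ) (ha : 1 ≤ a) (hn : 2 * a - 1 ≤ n) :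
    gpChromatic (brG n a) = a := by
  refine le_antisymm (Nat.sInf_le (brG_gpColorable n a ha hn)) ?_
  exact le_csInf ⟨a, brG_gpColorable n a ha hn⟩ (brG_ge n a ha hn)

lemma gpColorable_half {n : ℕ} (hn : 1 ≤ n) (G : SimpleGraph (Fin n)) :
    GpColorable G ((n + 1) / 2) := by
  refine ⟨fun v => ⟨(v : ℕ) / 2, by have := v.isLt; omega⟩, ?_⟩
  intro i u v p hp hlen x y z hx hy hz hxs hys hzs
  simp only [Set.mem_setOf_eq] at hx hy hz
  have ex : (x : ℕ) / 2 = (i : ℕ) := congrArg Fin.val hx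
  have ey : (y : ℕ) / 2 = (i : ℕ) := congrArg Fin.val hy
  have ez : (z : ℕ) / 2 = (i : ℕ) := congrArg Fin.val hz
  have : (x : ℕ) = y ∨ (y : ℕ) = z ∨ (x : ℕ) = z := by omega
  rcases this with h | h | h
  · exact Or.inl (Fin.ext h)
  · exact Or.inr (Or.inl (Fin.ext h))
  · exact Or.inr (Or.inr (Fin.ext h))

/-- For `a ≥ 1`, `n ≥ 1`, there is a graph of order `n` with `χ_gp(G) = a` iff `n ≥ 2a − 1`. -/
theorem exists_graph_gpChromatic (a n : ℕ) (ha : 1 ≤ a) (hn : 1 ≤ n) :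
    (∃ G : SimpleGraph (Fin n), gpChromatic G = a) ↔ 2 * a - 1 ≤ n := by
  constructor
  · rintro ⟨G, hG⟩
    have hle : gpChromatic G ≤ (n + 1) / 2 := Nat.sInf_le (gpColorable_half hn G)
    rw [hG] at hle
    omega
  · intro h
    exact ⟨brG n a, brG_gpChromatic n a ha h⟩
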